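/- Let N ≥ 1, let 1 ≤ k ≤ N, and let p be a real number with 0 ≤ p ≤ 1/k. Then the linear map Λ_p : M_N(ℂ) → M_N(ℂ) defined by Λ_p(X) = Tr(X)·I − p·X is k-positive. -/

import Mathlib

open Matrix BigOperators
open scoped ComplexOrder

/-- The `n × n` matrix `M_ψ` associated to a vector `ψ ∈ ℂ^α ⊗ ℂ^β`,
with entries `(M_ψ)_{ij} = ⟨e_i ⊗ e_j, ψ⟩ = ψ (i, j)`. -/
def matOfVec {α β : Type*} (ψ : α × β → ℂ) : Matrix α β ℂ :=
  Matrix.of fun i j => ψ (i, j)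

/-- The Schmidt rank of a bipartite vector is the rank of its associated matrix. -/
noncomputable def schmidtRank {α β : Type*} [Fintype β] (ψ : α × β → ℂ) : ℕ :=
  (matOfVec ψ).rank

/-- `ψ` is a unit vector. -/
def IsUnitVec {γ : Type*} [Fintype γ] (ψ : γ → ℂ) : Prop :=
  ∑ x, Complex.normSq (ψ x) = 1

/-- The outer product `|ψ⟩⟨ψ|`. -/
def outer {γ : Type*} (ψ : γ → ℂ) : Matrix γ γ ℂ :=
  Matrix.of fun x y => ψ x * star (ψ y)

/-- `ρ ∈ S_k`: `ρ` admits a decomposition `ρ = ∑ i, p i • |ψ i⟩⟨ψ i|` with `p i ≥ 0`,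
`∑ i, p i = 1`, each `ψ i` a unit vector of Schmidt rank at most `k`. -/
def InSchmidtClass {α : Type*} [Fintype α] (k : ℕ)
    (ρ : Matrix (α × α) (α × α) ℂ) : Prop :=
  ∃ (m : ℕ) (p : Fin m → ℝ) (ψ : Fin m → α × α → ℂ),
    (∀ i, 0 ≤ p i) ∧ (∑ i, p i) = 1 ∧
    (∀ i, IsUnitVec (ψ i)) ∧ (∀ i, schmidtRank (ψ i) ≤ k) ∧
    ρ = ∑ i, (p i : ℂ) • outer (ψ i)

/-- The map `1 ⊗ Λ`, applying `Λ` to each block of a matrix indexed by `γ × Fin n`. -/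
def blockMap {γ : Type*} {n m : ℕ}
    (Λ : Matrix (Fin n) (Fin n) ℂ → Matrix (Fin m) (Fin m) ℂ)
    (X : Matrix (γ × Fin n) (γ × Fin n) ℂ) : Matrix (γ × Fin m) (γ × Fin m) ℂ :=
  Matrix.of fun a b => Λ (Matrix.of fun s t => X (a.1, s) (b.1, t)) a.2 b.2

/-- `Λ` is Hermiticity-preserving: `Λ(X†) = Λ(X)†`. -/
def HermPreserving {n m : ℕ}
    (Λ : Matrix (Fin n) (Fin n) ℂ → Matrix (Fin m) (Fin m) ℂ) : Prop :=
  ∀ X, Λ Xᴴ = (Λ X)ᴴ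

/-- `Λ` is `k`-positive: `(1 ⊗ Λ)(|ψ⟩⟨ψ|)` is positive semidefinite for every
unit vector `ψ ∈ ℂ^N ⊗ ℂ^N` of Schmidt rank at most `k`. -/
def kPositive {N : ℕ} (k : ℕ)
    (Λ : Matrix (Fin N) (Fin N) ℂ → Matrix (Fin N) (Fin N) ℂ) : Prop :=
  ∀ ψ : Fin N × Fin N → ℂ, IsUnitVec ψ → schmidtRank ψ ≤ k →
    (blockMap Λ (outer ψ)).PosSemidef

lemma trace_normSq_le_rank_mul_frobenius {n k : ℕ} (W : Matrix (Fin n) (Fin n) ℂ)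
    (hW : W.rank ≤ k) :
    Complex.normSq W.trace ≤ (k : ℝ) * ∑ u, ∑ s, Complex.normSq (W u s) := by
  set H : Matrix (Fin n) (Fin n) ℂ := W * Wᴴ with hHdef
  have hH : H.IsHermitian := isHermitian_mul_conjTranspose_self W
  set d : Fin n → ℝ := hH.eigenvalues with hd
  have hd0 : ∀ a, 0 ≤ d a := fun a => (posSemidef_self_mul_conjTranspose W).eigenvalues_nonneg a
  set U : Matrix (Fin n) (Fin n) ℂ := (hH.eigenvectorUnitary : Matrix (Fin n) (Fin n) ℂ) with hUdef
  have hUU : star U * U = 1 := Matrix.mem_unitaryGroup_iff'.mp hH.eigenvectorUnitary.2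
  have hUU' : U * star U = 1 := Matrix.mem_unitaryGroup_iff.mp hH.eigenvectorUnitary.2
  have hspec : H = U * Matrix.diagonal (Complex.ofReal ∘ d) * star U := hH.spectral_theorem
  have hdiag : star U * H * U = Matrix.diagonal (Complex.ofReal ∘ d) := by
    rw [hspec]
    calc star U * (U * diagonal (Complex.ofReal ∘ d) * star U) * U
        = (star U * U) * diagonal (Complex.ofReal ∘ d) * (star U * U) := by
          noncomm_ring
      _ = diagonal (Complex.ofReal ∘ d) := by rw [hUU, one_mul, mul_one]
  set X : Matrix (Fin n) (Fin n) ℂ := star U * W with hXdef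
  set Y : Matrix (Fin n) (Fin n) ℂ := X * U with hYdef
  have htrY : W.trace = Y.trace := by
    rw [hYdef, hXdef, Matrix.trace_mul_cycle, hUU', one_mul]
  have hrow : ∀ a, ∑ s, Complex.normSq (X a s) = d a := by
    intro a
    have hXX : X * Xᴴ = Matrix.diagonal (Complex.ofReal ∘ d) := by
      rw [← hdiag, hXdef, hHdef]
      simp only [star_eq_conjTranspose, conjTranspose_mul, conjTranspose_conjTranspose]
      noncomm_ring
    have h1 := congrArg (fun (Z : Matrix (Fin n) (Fin n) ℂ) => Z a a) hXX
    simp only [Matrix.mul_apply, Matrix.diagonal_apply_eq, Function.comp,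
      Matrix.conjTranspose_apply, ← Complex.normSq_eq_conj_mul_self] at h1
    have h2 : ((∑ s, Complex.normSq (X a s) : ℝ) : ℂ) = ((d a : ℝ) : ℂ) := by
      push_cast
      simpa [RCLike.star_def, Complex.mul_conj] using h1
    exact_mod_cast h2
  set S : Finset (Fin n) := Finset.univ.filter (fun a => d a ≠ 0) with hS
  have hcard : S.card ≤ k := by
    have h1 : H.rank = Fintype.card {i // d i ≠ 0} := hH.rank_eq_card_non_zero_eigs
    have h2 : H.rank = W.rank := rank_self_mul_conjTranspose W
    have h3 : Fintype.card {i // d i ≠ 0} = S.card := Fintype.card_subtype _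
    omega
  have hzero : ∀ a, d a = 0 → Y a a = 0 := by
    intro a ha
    have h0 : ∑ s, Complex.normSq (X a s) = 0 := by rw [hrow a, ha]
    have hXa : ∀ s, X a s = 0 := by
      intro s
      have := (Finset.sum_eq_zero_iff_of_nonneg
        (fun i _ => Complex.normSq_nonneg _)).1 h0 s (Finset.mem_univ s)
      exact Complex.normSq_eq_zero.mp this
    simp [hYdef, Matrix.mul_apply, hXa]
  have hUcol : ∀ a, ∑ s, Complex.normSq (U s a) = 1 := by
    intro a
    have h1 := congrArg (fun (Z : Matrix (Fin n) (Fin n) ℂ) => Z a a) hUU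
    simp only [Matrix.mul_apply, Matrix.one_apply_eq, star_eq_conjTranspose,
      Matrix.conjTranspose_apply] at h1
    have h2 : ((∑ s, Complex.normSq (U s a) : ℝ) : ℂ) = ((1 : ℝ) : ℂ) := by
      push_cast
      simpa [Complex.normSq_eq_conj_mul_self] using h1
    exact_mod_cast h2
  have habs : ∀ a, ‖Y a a‖ ≤ Real.sqrt (d a) := by
    intro a
    have h1 : ‖Y a a‖ ≤ ∑ s, ‖X a s‖ * ‖U s a‖ := by
      rw [hYdef]
      refine le_trans ?_ (le_of_eq rfl)
      calc ‖(X * U) a a‖ = ‖∑ s, X a s * U s a‖ := by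
            rw [Matrix.mul_apply]
        _ ≤ ∑ s, ‖X a s * U s a‖ := by
            simpa using norm_sum_le Finset.univ (fun s => X a s * U s a)
        _ = ∑ s, ‖X a s‖ * ‖U s a‖ := by
            simp [AbsoluteValue.map_mul]
    have h2 : (∑ s, ‖X a s‖ * ‖U s a‖)^2
        ≤ (∑ s, ‖X a s‖^2) * (∑ s, ‖U s a‖^2) :=
      Finset.sum_mul_sq_le_sq_mul_sq _ _ _
    have h3 : ∑ s, ‖X a s‖^2 = d a := by
      simpa [Complex.sq_norm] using hrow a
    have h4 : ∑ s, ‖U s a‖^2 = 1 := by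
      simpa [Complex.sq_norm] using hUcol a
    have h5 : (‖Y a a‖)^2 ≤ d a := by
      nlinarith [norm_nonneg (Y a a),
        Finset.sum_nonneg (s := (Finset.univ : Finset (Fin n)))
          (f := fun s => ‖X a s‖ * ‖U s a‖)
          (fun s _ => mul_nonneg (norm_nonneg (X a s)) (norm_nonneg (U s a)))]
    have := Real.sqrt_le_sqrt h5
    rwa [Real.sqrt_sq (norm_nonneg _)] at this
  have hT : W.trace = ∑ a ∈ S, Y a a := by
    rw [htrY]
    symm
    refine Finset.sum_subset (Finset.subset_univ _) ?_
    intro a _ haS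
    apply hzero
    by_contra hne
    exact haS (Finset.mem_filter.mpr ⟨Finset.mem_univ a, hne⟩)
  have h5 : ‖W.trace‖ ≤ ∑ a ∈ S, Real.sqrt (d a) := by
    rw [hT]
    refine le_trans ?_ (Finset.sum_le_sum fun a _ => habs a)
    simpa using norm_sum_le S (fun a => Y a a)
  have h6 : (∑ a ∈ S, Real.sqrt (d a))^2 ≤ (S.card : ℝ) * ∑ a ∈ S, d a := by
    have := sq_sum_le_card_mul_sum_sq (s := S) (f := fun a => Real.sqrt (d a))
    simpa [Real.sq_sqrt (hd0 _)] using this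
  have h7 : ∑ a ∈ S, d a ≤ ∑ a, d a :=
    Finset.sum_le_sum_of_subset_of_nonneg (Finset.subset_univ _) (fun a _ _ => hd0 a)
  have h8 : ∑ a, d a = ∑ u, ∑ s, Complex.normSq (W u s) := by
    have hth : H.trace = ∑ a, ((d a : ℝ) : ℂ) := by
      rw [hspec, Matrix.trace_mul_cycle, hUU, one_mul, Matrix.trace_diagonal]
      simp
    have hth2 : H.trace = ((∑ u, ∑ s, Complex.normSq (W u s) : ℝ) : ℂ) := by
      rw [hHdef]
      simp only [Matrix.trace, Matrix.diag_apply, Matrix.mul_apply,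
        Matrix.conjTranspose_apply, RCLike.star_def, Complex.mul_conj]
      push_cast
      ring
    have : ((∑ a, d a : ℝ) : ℂ) = ((∑ u, ∑ s, Complex.normSq (W u s) : ℝ) : ℂ) := by
      push_cast
      rw [← hth, hth2]
      push_cast
      ring
    exact_mod_cast this
  have hfin : Complex.normSq W.trace = (‖W.trace‖)^2 := (Complex.sq_norm _).symm
  rw [hfin, ← h8]
  have hcard' : (S.card : ℝ) ≤ (k : ℝ) := by exact_mod_cast hcard
  have habsnn : (0:ℝ) ≤ ‖W.trace‖ := norm_nonneg _
  have hsqrtnn : (0:ℝ) ≤ ∑ a ∈ S, Real.sqrt (d a) :=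
    Finset.sum_nonneg fun a _ => Real.sqrt_nonneg _
  have hSd : (0:ℝ) ≤ ∑ a ∈ S, d a := Finset.sum_nonneg fun a _ => hd0 a
  nlinarith [pow_le_pow_left₀ habsnn h5 2]

/-- For `1 ≤ k ≤ N` and `0 ≤ p ≤ 1/k`, the map
`Λ_p(X) = Tr(X)·I − p·X` on `M_N(ℂ)` is `k`-positive. -/
theorem lambda_p_kPositive {N k : ℕ} (hN : 1 ≤ N) (hk : 1 ≤ k) (hkN : k ≤ N)
    (p : ℝ) (hp0 : 0 ≤ p) (hp : p ≤ 1 / (k : ℝ)) :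
    kPositive k (fun X : Matrix (Fin N) (Fin N) ℂ =>
      X.trace • (1 : Matrix (Fin N) (Fin N) ℂ) - (p : ℂ) • X) := by
  intro ψ hψ hrank
  have hA : ∀ x y : Fin N × Fin N,
      blockMap (fun X : Matrix (Fin N) (Fin N) ℂ =>
        X.trace • (1 : Matrix (Fin N) (Fin N) ℂ) - (p : ℂ) • X) (outer ψ) x y =
      (∑ u, ψ (x.1, u) * star (ψ (y.1, u))) * (if x.2 = y.2 then 1 else 0)
        - (p : ℂ) * (ψ x * star (ψ y)) := by
    intro x y
    simp only [blockMap, outer, Matrix.of_apply, Matrix.sub_apply, Matrix.smul_apply,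
      Matrix.one_apply, Matrix.trace, Matrix.diag_apply, smul_eq_mul]
  have hsym : ∀ i j : Fin N,
      star (∑ u, ψ (j, u) * star (ψ (i, u))) = ∑ u, ψ (i, u) * star (ψ (j, u)) := by
    intro i j
    rw [star_sum]
    refine Finset.sum_congr rfl fun u _ => ?_
    simp [mul_comm]
  have hstarp : star ((p : ℂ)) = (p : ℂ) := by
    simp [Complex.star_def, Complex.conj_ofReal]
  rw [Matrix.posSemidef_iff_dotProduct_mulVec]
  constructor
  · -- Hermitian
    ext x y
    rw [Matrix.conjTranspose_apply, hA, hA]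
    by_cases h : x.2 = y.2
    · rw [if_pos h, if_pos h.symm, mul_one, mul_one, star_sub, star_mul', star_mul',
        star_star, hsym, hstarp]
      ring
    · rw [if_neg h, if_neg (fun hh => h hh.symm), mul_zero, mul_zero, zero_sub, zero_sub,
        star_neg, star_mul', star_mul', star_star, hstarp]
      ring
  · intro v
    set M : Matrix (Fin N) (Fin N) ℂ := matOfVec ψ with hM
    set W : Matrix (Fin N) (Fin N) ℂ := Mᴴ * matOfVec v with hWdef
    have hWapp : ∀ u s, W u s = ∑ j, star (ψ (j, u)) * v (j, s) := by
      intro u s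
      simp [hWdef, hM, Matrix.mul_apply, matOfVec, Matrix.conjTranspose_apply]
    have hstarW : ∀ u s, star (W u s) = ∑ j, ψ (j, u) * star (v (j, s)) := by
      intro u s
      rw [hWapp, star_sum]
      refine Finset.sum_congr rfl fun j _ => ?_
      simp [mul_comm]
    set T : ℂ := ∑ y : Fin N × Fin N, star (ψ y) * v y with hT
    have hTtr : W.trace = T := by
      rw [Matrix.trace, hT, Fintype.sum_prod_type, Finset.sum_comm]
      refine Finset.sum_congr rfl fun t _ => ?_
      rw [Matrix.diag_apply, hWapp]
    have hstarT : star T = ∑ x : Fin N × Fin N, ψ x * star (v x) := by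
      rw [hT, star_sum]
      refine Finset.sum_congr rfl fun y _ => ?_
      simp [mul_comm]
    -- collapse of the Kronecker delta
    have hδ : ∀ x : Fin N × Fin N,
        (∑ y : Fin N × Fin N, (∑ u, ψ (x.1, u) * star (ψ (y.1, u)))
            * (if x.2 = y.2 then 1 else 0) * v y)
        = ∑ j, (∑ u, ψ (x.1, u) * star (ψ (j, u))) * v (j, x.2) := by
      intro x
      rw [Fintype.sum_prod_type]
      refine Finset.sum_congr rfl fun j _ => ?_
      rw [Finset.sum_eq_single x.2]
      · rw [if_pos rfl, mul_one]
      · intro t _ ht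
        rw [if_neg (fun hh => ht hh.symm), mul_zero, zero_mul]
      · intro habs
        exact absurd (Finset.mem_univ _) habs
    have hinner : ∀ i s, (∑ j, (∑ u, ψ (i, u) * star (ψ (j, u))) * v (j, s))
        = ∑ u, ψ (i, u) * W u s := by
      intro i s
      simp only [Finset.sum_mul]
      rw [Finset.sum_comm]
      refine Finset.sum_congr rfl fun u _ => ?_
      rw [hWapp, Finset.mul_sum]
      refine Finset.sum_congr rfl fun j _ => ?_
      ring
    have key : star v ⬝ᵥ (blockMap (fun X : Matrix (Fin N) (Fin N) ℂ =>
          X.trace • (1 : Matrix (Fin N) (Fin N) ℂ) - (p : ℂ) • X) (outer ψ)) *ᵥ v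
        = (∑ u, ∑ s, star (W u s) * W u s) - (p : ℂ) * (star T * T) := by
      calc star v ⬝ᵥ (blockMap (fun X : Matrix (Fin N) (Fin N) ℂ =>
            X.trace • (1 : Matrix (Fin N) (Fin N) ℂ) - (p : ℂ) • X) (outer ψ)) *ᵥ v
          = ∑ x : Fin N × Fin N, star (v x) * ∑ y : Fin N × Fin N,
              (((∑ u, ψ (x.1, u) * star (ψ (y.1, u))) * (if x.2 = y.2 then 1 else 0)
                - (p : ℂ) * (ψ x * star (ψ y))) * v y) := by
            simp only [dotProduct, Matrix.mulVec, hA, Pi.star_apply]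
        _ = (∑ x : Fin N × Fin N, star (v x) * ∑ y : Fin N × Fin N,
              (∑ u, ψ (x.1, u) * star (ψ (y.1, u))) * (if x.2 = y.2 then 1 else 0) * v y)
            - ∑ x : Fin N × Fin N, star (v x) * ∑ y : Fin N × Fin N,
              (p : ℂ) * (ψ x * star (ψ y)) * v y := by
            simp only [sub_mul, Finset.sum_sub_distrib, mul_sub]
        _ = (∑ u, ∑ s, star (W u s) * W u s) - (p : ℂ) * (star T * T) := by
            congr 1
            · -- first term
              calc ∑ x : Fin N × Fin N, star (v x) * ∑ y : Fin N × Fin N,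
                    (∑ u, ψ (x.1, u) * star (ψ (y.1, u))) * (if x.2 = y.2 then 1 else 0) * v y
                  = ∑ x : Fin N × Fin N, star (v x) * ∑ u, ψ (x.1, u) * W u x.2 := by
                    refine Finset.sum_congr rfl fun x _ => ?_
                    rw [hδ x, hinner x.1 x.2]
                _ = ∑ i, ∑ s, ∑ u, (ψ (i, u) * star (v (i, s))) * W u s := by
                    rw [Fintype.sum_prod_type]
                    refine Finset.sum_congr rfl fun i _ => Finset.sum_congr rfl fun s _ => ?_
                    rw [Finset.mul_sum]
                    refine Finset.sum_congr rfl fun u _ => ?_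
                    ring
                _ = ∑ i, ∑ u, ∑ s, (ψ (i, u) * star (v (i, s))) * W u s := by
                    refine Finset.sum_congr rfl fun i _ => Finset.sum_comm
                _ = ∑ u, ∑ i, ∑ s, (ψ (i, u) * star (v (i, s))) * W u s := Finset.sum_comm
                _ = ∑ u, ∑ s, ∑ i, (ψ (i, u) * star (v (i, s))) * W u s := by
                    refine Finset.sum_congr rfl fun u _ => Finset.sum_comm
                _ = ∑ u, ∑ s, star (W u s) * W u s := by
                    refine Finset.sum_congr rfl fun u _ => Finset.sum_congr rfl fun s _ => ?_
                    rw [hstarW, Finset.sum_mul]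
            · -- second term
              calc ∑ x : Fin N × Fin N, star (v x) * ∑ y : Fin N × Fin N,
                    (p : ℂ) * (ψ x * star (ψ y)) * v y
                  = ∑ x : Fin N × Fin N, (p : ℂ) * ((ψ x * star (v x))
                      * ∑ y : Fin N × Fin N, star (ψ y) * v y) := by
                    refine Finset.sum_congr rfl fun x _ => ?_
                    rw [Finset.mul_sum, Finset.mul_sum, Finset.mul_sum]
                    refine Finset.sum_congr rfl fun y _ => ?_
                    ring
                _ = (p : ℂ) * (star T * T) := by
                    rw [← Finset.mul_sum, hstarT, hT, ← Finset.sum_mul]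
    -- rank bound
    have hrW : W.rank ≤ k := by
      refine le_trans (le_trans (Matrix.rank_mul_le_left _ _) ?_) hrank
      exact le_of_eq (Matrix.rank_conjTranspose _)
    have hineq := trace_normSq_le_rank_mul_frobenius W hrW
    rw [hTtr] at hineq
    -- turn everything real
    have key2 : star v ⬝ᵥ (blockMap (fun X : Matrix (Fin N) (Fin N) ℂ =>
          X.trace • (1 : Matrix (Fin N) (Fin N) ℂ) - (p : ℂ) • X) (outer ψ)) *ᵥ v
        = (((∑ u, ∑ s, Complex.normSq (W u s)) - p * Complex.normSq T : ℝ) : ℂ) := by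
      rw [key]
      have hns : ∀ z : ℂ, star z * z = ((Complex.normSq z : ℝ) : ℂ) := fun z => by
        rw [Complex.star_def, ← Complex.normSq_eq_conj_mul_self]
      simp only [hns]
      push_cast
      ring
    rw [key2]
    rw [Complex.zero_le_real]
    have hk0 : (0 : ℝ) < (k : ℝ) := by positivity
    have h2 : p * Complex.normSq T ≤ (1 / (k : ℝ)) * ((k : ℝ) * ∑ u, ∑ s, Complex.normSq (W u s)) := by
      have := mul_le_mul hp hineq (Complex.normSq_nonneg _) (by positivity)
      exact this
    have h3 : (1 / (k : ℝ)) * ((k : ℝ) * ∑ u, ∑ s, Complex.normSq (W u s))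
        = ∑ u, ∑ s, Complex.normSq (W u s) := by
      field_simp
    linarith
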